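/- Let ε be a primitive ℓ-th root of unity in F and let X, Y be the generalized Pauli matrices in M_ℓ(F). Then the matrices X^i Y^j for 0 ≤ i, j < ℓ form a basis of M_ℓ(F) as an F-vector space, and each X^i Y^j is invertible. Consequently M_ℓ(F) = ⊕_{(i,j) ∈ Z_ℓ × Z_ℓ} F·X^i Y^j is a (Z_ℓ × Z_ℓ)-graded division algebra. -/

import Mathlib

/-- The generalized Pauli matrix `X = diag(ε^{ℓ-1}, …, ε, 1)`. -/
def pauliX (F : Type*) [Field F] (ℓ : ℕ) (ε : F) : Matrix (Fin ℓ) (Fin ℓ) F :=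
  Matrix.diagonal fun i => ε ^ (ℓ - 1 - (i : ℕ))

/-- The generalized Pauli matrix `Y`, the cyclic permutation matrix. -/
def pauliY (F : Type*) [Field F] (ℓ : ℕ) : Matrix (Fin ℓ) (Fin ℓ) F :=
  Matrix.of fun i j => if (j : ℕ) = ((i : ℕ) + 1) % ℓ then 1 else 0

/-- The `(ℤ/ℓ × ℤ/ℓ)`-grading of `M_ℓ(F)` whose component of degree `(i,j)` is
`F · XⁱYʲ`. -/
def pauliGrading (F : Type*) [Field F] (ℓ : ℕ) (ε : F) :
    ZMod ℓ × ZMod ℓ → Submodule F (Matrix (Fin ℓ) (Fin ℓ) F) :=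
  fun g => Submodule.span F {pauliX F ℓ ε ^ (g.1.val) * pauliY F ℓ ^ (g.2.val)}

section helpers
variable {F : Type*} [Field F] {ℓ : ℕ} {ε : F}
open Fin.NatCast

lemma pauliY_apply [NeZero ℓ] (a b : Fin ℓ) :
    pauliY F ℓ a b = if b = a + 1 then 1 else 0 := by
  simp only [pauliY, Matrix.of_apply]
  congr 1
  rw [← Fin.val_eq_val, Fin.add_def]
  simp [Nat.add_mod]

lemma pauliY_pow [NeZero ℓ] (j : ℕ) :
    (pauliY F ℓ ^ j) = Matrix.of fun a b => if b = a + (j : Fin ℓ) then (1 : F) else 0 := by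
  induction j with
  | zero => ext a b; simp [Matrix.one_apply, eq_comm]
  | succ j ih =>
    ext a b
    rw [pow_succ, Matrix.mul_apply]
    simp only [ih, pauliY_apply, Matrix.of_apply, ite_mul, one_mul, zero_mul]
    rw [Finset.sum_ite_eq' Finset.univ (a + (j : Fin ℓ)) (fun x => if b = x + 1 then (1:F) else 0)]
    simp [add_assoc]

lemma pauliXY_apply [NeZero ℓ] (i j : ℕ) (a b : Fin ℓ) :
    (pauliX F ℓ ε ^ i * pauliY F ℓ ^ j) a b =
      if b = a + (j : Fin ℓ) then ε ^ ((ℓ - 1 - (a : ℕ)) * i) else 0 := by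
  rw [pauliX, Matrix.diagonal_pow, Matrix.diagonal_mul, pauliY_pow]
  simp [pow_mul, mul_ite]

lemma pow_congr_mod (h1 : ε ^ ℓ = 1) {m n : ℕ} (h : m % ℓ = n % ℓ) : ε ^ m = ε ^ n := by
  rcases Nat.eq_zero_or_pos ℓ with rfl | hl
  · simp only [Nat.mod_zero] at h; rw [h]
  · conv_lhs => rw [← Nat.div_add_mod m ℓ]
    conv_rhs => rw [← Nat.div_add_mod n ℓ]
    rw [pow_add, pow_add, pow_mul, pow_mul, h1, one_pow, one_pow, h]

lemma pow_congr_mod' (h1 : ε ^ ℓ = 1) {m n : ℕ} (h : (m : ZMod ℓ) = n) : ε ^ m = ε ^ n :=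
  pow_congr_mod h1 ((ZMod.natCast_eq_natCast_iff' m n ℓ).mp h)

lemma pauliX_pow_card (h1 : ε ^ ℓ = 1) : pauliX F ℓ ε ^ ℓ = 1 := by
  rw [pauliX, Matrix.diagonal_pow]
  have : (fun i : Fin ℓ => ε ^ (ℓ - 1 - (i : ℕ))) ^ ℓ = fun _ => (1 : F) := by
    funext a
    simp only [Pi.pow_apply, ← pow_mul]
    rw [mul_comm, pow_mul, h1, one_pow]
  rw [this, Matrix.diagonal_one]

lemma pauliY_pow_card (hℓ : 0 < ℓ) : pauliY F ℓ ^ ℓ = 1 := by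
  haveI : NeZero ℓ := ⟨hℓ.ne'⟩
  rw [pauliY_pow]
  ext a b
  simp [Matrix.one_apply, eq_comm]

lemma pow_reduce {M : Type*} [Monoid M] {x : M} (hx : x ^ ℓ = 1) (i : ℕ) :
    x ^ i = x ^ (i % ℓ) := by
  conv_lhs => rw [← Nat.div_add_mod i ℓ, pow_add, pow_mul, hx, one_pow, one_mul]

lemma pauliXY_reduce (hℓ : 0 < ℓ) (h1 : ε ^ ℓ = 1) (i j : ℕ) :
    pauliX F ℓ ε ^ i * pauliY F ℓ ^ j
      = pauliX F ℓ ε ^ (i % ℓ) * pauliY F ℓ ^ (j % ℓ) := by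
  rw [pow_reduce (pauliX_pow_card h1) i, pow_reduce (pauliY_pow_card hℓ) j]

lemma pauliXY_mul (hℓ : 0 < ℓ) (h1 : ε ^ ℓ = 1) (p q r s : ℕ) :
    (pauliX F ℓ ε ^ p * pauliY F ℓ ^ q) * (pauliX F ℓ ε ^ r * pauliY F ℓ ^ s)
      = ε ^ ((ℓ - q % ℓ) * r) • (pauliX F ℓ ε ^ (p + r) * pauliY F ℓ ^ (q + s)) := by
  haveI : NeZero ℓ := ⟨hℓ.ne'⟩
  ext a b
  rw [Matrix.mul_apply, Matrix.smul_apply]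
  simp only [pauliXY_apply, ite_mul, zero_mul]
  rw [Finset.sum_ite_eq' Finset.univ (a + (q : Fin ℓ))]
  simp only [Finset.mem_univ, if_true, smul_ite, smul_zero, Nat.cast_add, ← add_assoc, smul_eq_mul,
    ← pow_add]
  split
  · rw [← pow_add, ← pow_add]
    apply pow_congr_mod' h1
    have h1' : (a + (q : Fin ℓ) : Fin ℓ).val = (a.val + q) % ℓ := by
      rw [Fin.add_def]
      simp [Nat.add_mod]
    rw [h1']
    have ha := a.isLt
    have hm1 := Nat.mod_lt (a.val + q) hℓ
    have hm2 := Nat.mod_lt q hℓ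
    have c1 : ((ℓ - 1 - a.val : ℕ) : ZMod ℓ) = -1 - (a.val : ℕ) := by
      have e : ℓ - 1 - a.val + (1 + a.val) = ℓ := by omega
      have e2 := congrArg (Nat.cast (R := ZMod ℓ)) e
      push_cast [ZMod.natCast_self] at e2
      linear_combination e2
    have c2 : ((ℓ - 1 - (a.val + q) % ℓ : ℕ) : ZMod ℓ) = -1 - (a.val : ℕ) - (q : ℕ) := by
      have e : ℓ - 1 - (a.val + q) % ℓ + (1 + (a.val + q) % ℓ) = ℓ := by omega
      have e2 := congrArg (Nat.cast (R := ZMod ℓ)) e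
      push_cast [ZMod.natCast_self, ZMod.natCast_mod] at e2
      linear_combination e2
    have c3 : ((ℓ - q % ℓ : ℕ) : ZMod ℓ) = -(q : ℕ) := by
      have e : ℓ - q % ℓ + q % ℓ = ℓ := by omega
      have e2 := congrArg (Nat.cast (R := ZMod ℓ)) e
      push_cast [ZMod.natCast_self, ZMod.natCast_mod] at e2
      linear_combination e2
    push_cast [c1, c2, c3]
    ring
  · simp
end helpers

section main
variable {F : Type*} [Field F] {ℓ : ℕ} {ε : F}

lemma pauli_li (hℓ : 0 < ℓ) (hε : IsPrimitiveRoot ε ℓ) :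
    LinearIndependent F (fun p : Fin ℓ × Fin ℓ =>
      pauliX F ℓ ε ^ ((p.1 : ℕ)) * pauliY F ℓ ^ ((p.2 : ℕ))) := by
  haveI : NeZero ℓ := ⟨hℓ.ne'⟩
  rw [Fintype.linearIndependent_iff]
  intro c hc
  have key : ∀ (j k : Fin ℓ), ∑ i : Fin ℓ, c (i, j) * ε ^ ((k : ℕ) * (i : ℕ)) = 0 := by
    intro j k
    have h0 := congrFun (congrFun hc k.rev) (k.rev + j)
    rw [Matrix.sum_apply, Matrix.zero_apply] at h0
    have hk : ℓ - 1 - (k.rev : ℕ) = (k : ℕ) := by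
      rw [Fin.val_rev]; omega
    simp only [Matrix.smul_apply, pauliXY_apply, Fin.cast_val_eq_self, smul_eq_mul,
      mul_ite, mul_zero, add_right_inj] at h0
    rw [Fintype.sum_prod_type_right] at h0
    simp only [Finset.sum_ite_irrel, Finset.sum_const_zero, Finset.sum_ite_eq,
      Finset.mem_univ, if_true, hk] at h0
    exact h0
  intro p
  obtain ⟨i0, j0⟩ := p
  set V := Matrix.vandermonde (fun k : Fin ℓ => ε ^ (k : ℕ)) with hVdef
  have hdet : V.det ≠ 0 := by
    rw [hVdef, Ne, Matrix.det_vandermonde_eq_zero_iff]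
    rintro ⟨i, j, hij, hne⟩
    exact hne (Fin.ext (hε.pow_inj i.isLt j.isLt hij))
  set w : Fin ℓ → F := fun i => c (i, j0) with hwdef
  have hV : V.mulVec w = 0 := by
    funext k
    have := key j0 k
    simp only [Matrix.mulVec, dotProduct, hVdef, Matrix.vandermonde, Pi.zero_apply,
      Matrix.of_apply, hwdef, ← pow_mul]
    rw [← this]
    exact Finset.sum_congr rfl fun i _ => mul_comm _ _
  have hw : w = 0 := by
    have h2 := congrArg (fun u => V⁻¹.mulVec u) hV
    simpa [Matrix.mulVec_mulVec, Matrix.nonsing_inv_mul V (isUnit_iff_ne_zero.mpr hdet),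
      Matrix.mulVec_zero, Matrix.one_mulVec] using h2
  exact congrFun hw i0
end main

/-- The matrices `XⁱYʲ`, `0 ≤ i,j < ℓ`, form a basis of `M_ℓ(F)`, each of them is
invertible, and the resulting `(ℤ/ℓ × ℤ/ℓ)`-grading makes `M_ℓ(F)` a graded division
algebra. -/
theorem pauli_basis_and_graded_division
    {F : Type*} [Field F] {ℓ : ℕ} (hℓ : 0 < ℓ) {ε : F}
    (hε : IsPrimitiveRoot ε ℓ) :
    (∃ b : Module.Basis (Fin ℓ × Fin ℓ) F (Matrix (Fin ℓ) (Fin ℓ) F),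
      ∀ p : Fin ℓ × Fin ℓ,
        b p = pauliX F ℓ ε ^ ((p.1 : ℕ)) * pauliY F ℓ ^ ((p.2 : ℕ))) ∧
    (∀ i j : ℕ, IsUnit (pauliX F ℓ ε ^ i * pauliY F ℓ ^ j)) ∧
    (∀ i j : ℕ, pauliX F ℓ ε ^ i * pauliY F ℓ ^ j ∈
        pauliGrading F ℓ ε ((i : ZMod ℓ), (j : ZMod ℓ))) ∧
    (∀ g h : ZMod ℓ × ZMod ℓ,
      pauliGrading F ℓ ε g * pauliGrading F ℓ ε h ≤ pauliGrading F ℓ ε (g + h)) ∧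
    (∀ (g : ZMod ℓ × ZMod ℓ) (x : Matrix (Fin ℓ) (Fin ℓ) F),
      x ∈ pauliGrading F ℓ ε g → x ≠ 0 → IsUnit x) := by
  haveI : NeZero ℓ := ⟨hℓ.ne'⟩
  have hε1 : ε ^ ℓ = 1 := hε.pow_eq_one
  have hℓ1 : ℓ - 1 + 1 = ℓ := by omega
  have hX : IsUnit (pauliX F ℓ ε) := IsUnit.of_pow_eq_one (pauliX_pow_card hε1) hℓ.ne'
  have hY : IsUnit (pauliY F ℓ) := IsUnit.of_pow_eq_one (pauliY_pow_card hℓ) hℓ.ne'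
  have hunit : ∀ i j : ℕ, IsUnit (pauliX F ℓ ε ^ i * pauliY F ℓ ^ j) :=
    fun i j => (hX.pow i).mul (hY.pow j)
  refine ⟨?_, hunit, ?_, ?_, ?_⟩
  · haveI : Nonempty (Fin ℓ × Fin ℓ) := ⟨⟨⟨0, hℓ⟩, ⟨0, hℓ⟩⟩⟩
    have hcard : Fintype.card (Fin ℓ × Fin ℓ)
        = Module.finrank F (Matrix (Fin ℓ) (Fin ℓ) F) := by
      simp [Module.finrank_matrix]
    exact ⟨basisOfLinearIndependentOfCardEqFinrank (pauli_li hℓ hε) hcard,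
      fun p => congrFun (coe_basisOfLinearIndependentOfCardEqFinrank _ _) p⟩
  · intro i j
    rw [pauliXY_reduce hℓ hε1 i j]
    apply Submodule.subset_span
    simp [pauliGrading, ZMod.val_natCast]
  · intro g h
    apply Submodule.mul_le.mpr
    intro x hx y hy
    rw [pauliGrading, Submodule.mem_span_singleton] at hx hy
    obtain ⟨cx, rfl⟩ := hx
    obtain ⟨cy, rfl⟩ := hy
    rw [smul_mul_smul_comm, pauliXY_mul hℓ hε1]
    apply Submodule.smul_mem
    apply Submodule.smul_mem
    apply Submodule.subset_span
    simp only [pauliGrading, Set.mem_singleton_iff, Prod.fst_add, Prod.snd_add, ZMod.val_add]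
    exact pauliXY_reduce hℓ hε1 _ _
  · intro g x hx hne
    rw [pauliGrading, Submodule.mem_span_singleton] at hx
    obtain ⟨cx, rfl⟩ := hx
    have hcx : cx ≠ 0 := fun h => hne (by simp [h])
    rw [Algebra.smul_def]
    exact (IsUnit.map (algebraMap F (Matrix (Fin ℓ) (Fin ℓ) F))
      (isUnit_iff_ne_zero.mpr hcx)).mul (hunit _ _)
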